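/- Exact moment matching for linear systems: let H(s) = C(sE − A)⁻¹B, let V ∈ ℝ^{N×n} with VᵀV = I, and define the Galerkin-reduced transfer function H_r(s) = CV (s VᵀEV − VᵀAV)⁻¹ VᵀB. If span{k₀, …, k_k} ⊆ image(V), where k_i are the moment vectors of (sE − A)⁻¹B at s₀ (defined by A_{s₀}k₀ = −B, A_{s₀}k_i = E k_{i−1}), and if A_{s₀} and Vᵀ A_{s₀} V are invertible, then (dⁱ/dsⁱ)H(s)|_{s=s₀} = (dⁱ/dsⁱ)H_r(s)|_{s=s₀} for all i ≤ k, and moreover k_i = V k_{r,i} where the k_{r,i} satisfy the analogous reduced recursion with A_{r,s₀} = −s₀VᵀEV + VᵀAV. -/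

import Mathlib

open Matrix

section Open

variable {m P Q : ℕ}

lemma isOpen_unit_locus (E A : Matrix (Fin m) (Fin m) ℝ) :
    IsOpen {s : ℝ | IsUnit (s • E - A).det} := by
  have hc : Continuous fun s : ℝ => (s • E - A).det := by
    apply Continuous.matrix_det
    exact (continuous_id.smul continuous_const).sub continuous_const
  have : {s : ℝ | IsUnit (s • E - A).det} = (fun s : ℝ => (s • E - A).det) ⁻¹' {x | x ≠ 0} := by
    ext s; simp [isUnit_iff_ne_zero]
  rw [this]; exact isOpen_ne.preimage hc

end Open

section Aux

variable {m P Q : ℕ}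

attribute [local instance] Matrix.linftyOpNormedRing Matrix.linftyOpNormedAlgebra
  Matrix.linftyOpNormedAddCommGroup

/-- derivative of matrix inverse. -/
lemma hasDerivAt_matinv (E A : Matrix (Fin m) (Fin m) ℝ) {s : ℝ}
    (hs : IsUnit (s • E - A).det) :
    HasDerivAt (fun t : ℝ => (t • E - A)⁻¹)
      (-((s • E - A)⁻¹ * E * (s • E - A)⁻¹)) s := by
  have hM : HasDerivAt (fun t : ℝ => t • E - A) E s := by
    exact (((hasDerivAt_id' s).smul_const E).sub_const A).congr_deriv (one_smul _ _)
  have hu : IsUnit (s • E - A) := (isUnit_iff_isUnit_det _).mpr hs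
  have hinv : HasFDerivAt Ring.inverse
      (-ContinuousLinearMap.mulLeftRight ℝ _ (↑hu.unit⁻¹) (↑hu.unit⁻¹)) (s • E - A) := by
    simpa using hasFDerivAt_ringInverse (𝕜 := ℝ) hu.unit
  have := hinv.comp_hasDerivAt s hM
  have hcoe : (↑hu.unit⁻¹ : Matrix (Fin m) (Fin m) ℝ) = (s • E - A)⁻¹ := by
    rw [Matrix.nonsing_inv_eq_ringInverse, ← Ring.inverse_unit hu.unit]
    exact congrArg _ hu.unit_spec
  simp only [ContinuousLinearMap.neg_apply, ContinuousLinearMap.mulLeftRight_apply, hcoe] at this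
  have heq : (fun t : ℝ => Ring.inverse (t • E - A)) = fun t : ℝ => (t • E - A)⁻¹ := by
    funext t; rw [Matrix.nonsing_inv_eq_ringInverse]
  rw [← heq]
  exact this

end Aux

section Core

variable {m P Q : ℕ}

attribute [local instance] Matrix.linftyOpNormedRing Matrix.linftyOpNormedAlgebra
  Matrix.linftyOpNormedAddCommGroup

lemma hasDerivAt_W (E A : Matrix (Fin m) (Fin m) ℝ) (j : ℕ) {s : ℝ}
    (hs : IsUnit (s • E - A).det) :
    HasDerivAt (fun t : ℝ => ((t • E - A)⁻¹ * E) ^ j * (t • E - A)⁻¹)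
      (-((j : ℝ) + 1) • (((s • E - A)⁻¹ * E) ^ (j + 1) * (s • E - A)⁻¹)) s := by
  induction j with
  | zero =>
    simp only [pow_zero, one_mul, Nat.cast_zero, zero_add, pow_one]
    have := hasDerivAt_matinv E A hs
    convert this using 1
    module
  | succ j IH =>
    have hfun : (fun t : ℝ => ((t • E - A)⁻¹ * E) ^ (j + 1) * (t • E - A)⁻¹)
        = fun t : ℝ => ((t • E - A)⁻¹ * E) * (((t • E - A)⁻¹ * E) ^ j * (t • E - A)⁻¹) := by
      funext t; rw [pow_succ', mul_assoc]
    rw [hfun]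
    have hf : HasDerivAt (fun t : ℝ => (t • E - A)⁻¹ * E)
        (-((s • E - A)⁻¹ * E * (s • E - A)⁻¹) * E) s :=
      (hasDerivAt_matinv E A hs).mul_const E
    have := hf.mul IH
    refine this.congr_deriv ?_
    simp only [pow_succ', mul_assoc, neg_mul, mul_smul_comm, neg_smul, mul_neg, smul_smul]
    push_cast
    module

lemma moment_deriv (E A : Matrix (Fin m) (Fin m) ℝ) (B : Matrix (Fin m) (Fin P) ℝ)
    (C : Matrix (Fin Q) (Fin m) ℝ) (s₀ : ℝ)
    (hA : IsUnit ((-s₀) • E + A).det)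
    (kv : ℕ → Matrix (Fin m) (Fin P) ℝ)
    (h0 : ((-s₀) • E + A) * kv 0 = -B)
    (hrec : ∀ i : ℕ, ((-s₀) • E + A) * kv (i + 1) = E * kv i)
    (i : ℕ) (r : Fin Q) (c : Fin P) :
    iteratedDeriv i (fun s : ℝ => (C * (s • E - A)⁻¹ * B) r c) s₀
      = (Nat.factorial i : ℝ) * (C * kv i) r c := by
  classical
  -- notation
  set W : ℕ → ℝ → Matrix (Fin m) (Fin m) ℝ :=
    fun j s => ((s • E - A)⁻¹ * E) ^ j * (s • E - A)⁻¹ with hWdef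
  have hneg : (-s₀) • E + A = -(s₀ • E - A) := by rw [neg_smul, neg_sub]; abel
  have hs₀ : IsUnit (s₀ • E - A).det := by
    rw [hneg, Matrix.det_neg, isUnit_iff_ne_zero] at hA
    rw [isUnit_iff_ne_zero]
    exact right_ne_zero_of_mul hA
  -- the evaluation linear map
  let L : Matrix (Fin m) (Fin m) ℝ →ₗ[ℝ] ℝ :=
    { toFun := fun X => (C * X * B) r c
      map_add' := by intro X Y; simp [Matrix.mul_add, Matrix.add_mul]
      map_smul' := by intro a X; simp [Matrix.mul_smul, Matrix.smul_mul] }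
  let Lc : Matrix (Fin m) (Fin m) ℝ →L[ℝ] ℝ := L.toContinuousLinearMap
  have hLc : ∀ X, Lc X = (C * X * B) r c := fun X => rfl
  -- derivative of the scalar functions
  have hg : ∀ j : ℕ, ∀ s : ℝ, IsUnit (s • E - A).det →
      HasDerivAt (fun t : ℝ => (C * W j t * B) r c)
        (-((j : ℝ) + 1) * ((C * W (j + 1) s * B) r c)) s := by
    intro j s hs
    have := Lc.hasFDerivAt.comp_hasDerivAt s (hasDerivAt_W E A j hs)
    refine this.congr_deriv ?_
    show (C * ((-((j : ℝ) + 1)) • W (j + 1) s) * B) r c = _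
    simp [Matrix.mul_smul, Matrix.smul_mul, Matrix.smul_apply, smul_eq_mul]
  -- iterated derivative formula on the unit locus
  have main : ∀ j : ℕ, ∀ s : ℝ, IsUnit (s • E - A).det →
      iteratedDeriv j (fun t : ℝ => (C * W 0 t * B) r c) s
        = ((-1 : ℝ) ^ j * Nat.factorial j) * ((C * W j s * B) r c) := by
    intro j
    induction j with
    | zero => intro s hs; simp
    | succ j IH =>
      intro s hs
      rw [iteratedDeriv_succ]
      have hev : (iteratedDeriv j (fun t : ℝ => (C * W 0 t * B) r c))
          =ᶠ[nhds s] fun t => ((-1 : ℝ) ^ j * Nat.factorial j) * ((C * W j t * B) r c) := by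
        filter_upwards [(isOpen_unit_locus E A).mem_nhds hs] with t ht
        exact IH t ht
      rw [hev.deriv_eq]
      rw [deriv_const_mul _ (hg j s hs).differentiableAt, (hg j s hs).deriv]
      rw [Nat.factorial_succ]
      push_cast
      ring
  have h00 : (fun s : ℝ => (C * (s • E - A)⁻¹ * B) r c)
      = fun t : ℝ => (C * W 0 t * B) r c := by
    funext t; simp [hWdef]
  rw [h00, main i s₀ hs₀]
  -- moment identity : W i s₀ * B = (-1)^i • kv i
  have hMinv : IsUnit (s₀ • E - A) := (isUnit_iff_isUnit_det _).mpr hs₀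
  have hinvmul : (s₀ • E - A)⁻¹ * (s₀ • E - A) = 1 := Matrix.nonsing_inv_mul _ hs₀
  have hmom : ∀ j : ℕ, W j s₀ * B = ((-1 : ℝ) ^ j) • kv j := by
    intro j
    induction j with
    | zero =>
      have : (s₀ • E - A) * kv 0 = B := by
        rw [hneg] at h0
        rw [Matrix.neg_mul] at h0
        exact neg_injective h0
      simp only [hWdef, pow_zero, one_mul, pow_zero, one_smul]
      rw [← this, ← Matrix.mul_assoc, hinvmul, Matrix.one_mul]
    | succ j IH =>
      have hrecj : (s₀ • E - A) * kv (j + 1) = -(E * kv j) := by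
        have h' := hrec j
        rw [hneg] at h'
        rw [Matrix.neg_mul] at h'
        exact neg_eq_iff_eq_neg.mp h'
      have : kv (j + 1) = -((s₀ • E - A)⁻¹ * (E * kv j)) := by
        rw [← Matrix.mul_neg, ← hrecj, ← Matrix.mul_assoc, hinvmul, Matrix.one_mul]
      have hWs : W (j+1) s₀ * B = (s₀ • E - A)⁻¹ * (E * (W j s₀ * B)) := by
        simp only [hWdef, pow_succ', Matrix.mul_assoc]
      rw [hWs, IH]
      rw [Matrix.mul_smul, Matrix.mul_smul]
      rw [this]
      rw [pow_succ]
      module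
  rw [Matrix.mul_assoc, hmom i]
  simp only [Matrix.mul_smul, Matrix.smul_apply, smul_eq_mul]
  have hsq : ((-1 : ℝ)) ^ i * ((-1 : ℝ)) ^ i = 1 := by
    rw [← mul_pow]; norm_num
  linear_combination ((Nat.factorial i : ℝ) * (C * kv i) r c) * hsq

end Core


/-- Exact moment matching for linear systems via Galerkin projection: if the moment
vectors `k₀, …, k_k` of `(sE − A)⁻¹B` at `s₀` all lie in the image of the orthonormal
basis `V`, then the first `k` derivatives of `H(s) = C(sE − A)⁻¹B` and of the reduced
transfer function `H_r(s) = CV (sVᵀEV − VᵀAV)⁻¹ VᵀB` coincide at `s₀`, and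
`k_i = V k_{r,i}` for the reduced moment vectors `k_{r,i}`. -/
theorem linear_moment_matching {N n p q : ℕ}
    (E A : Matrix (Fin N) (Fin N) ℝ)
    (B : Matrix (Fin N) (Fin p) ℝ) (C : Matrix (Fin q) (Fin N) ℝ)
    (V : Matrix (Fin N) (Fin n) ℝ) (hV : Vᵀ * V = 1)
    (s₀ : ℝ)
    (hA : IsUnit ((-s₀) • E + A).det)
    (hAr : IsUnit ((-s₀) • (Vᵀ * E * V) + Vᵀ * A * V).det)
    (kvec : ℕ → Matrix (Fin N) (Fin p) ℝ)
    (hk0 : ((-s₀) • E + A) * kvec 0 = -B)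
    (hk : ∀ i : ℕ, ((-s₀) • E + A) * kvec (i + 1) = E * kvec i)
    (kr : ℕ → Matrix (Fin n) (Fin p) ℝ)
    (hkr0 : ((-s₀) • (Vᵀ * E * V) + Vᵀ * A * V) * kr 0 = -(Vᵀ * B))
    (hkr : ∀ i : ℕ, ((-s₀) • (Vᵀ * E * V) + Vᵀ * A * V) * kr (i + 1)
        = (Vᵀ * E * V) * kr i)
    (k : ℕ)
    (hspan : ∀ i ≤ k, ∃ Y : Matrix (Fin n) (Fin p) ℝ, V * Y = kvec i) :
    (∀ i ≤ k, ∀ r c,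
        iteratedDeriv i (fun s : ℝ => (C * (s • E - A)⁻¹ * B) r c) s₀
          = iteratedDeriv i
              (fun s : ℝ =>
                (C * V * (s • (Vᵀ * E * V) - Vᵀ * A * V)⁻¹ * (Vᵀ * B)) r c) s₀)
    ∧ ∀ i ≤ k, kvec i = V * kr i := by
  set Ar : Matrix (Fin n) (Fin n) ℝ := (-s₀) • (Vᵀ * E * V) + Vᵀ * A * V with hArdef
  have hAs : Ar = Vᵀ * ((-s₀) • E + A) * V := by
    rw [hArdef, Matrix.mul_add, Matrix.add_mul, Matrix.mul_smul, Matrix.smul_mul]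
  have hcancel : ∀ X Y : Matrix (Fin n) (Fin p) ℝ, Ar * X = Ar * Y → X = Y := by
    intro X Y h
    have h2 := congrArg (fun Z => Ar⁻¹ * Z) h
    simpa [← Matrix.mul_assoc, Matrix.nonsing_inv_mul _ hAr] using h2
  have part2 : ∀ i ≤ k, kvec i = V * kr i := by
    intro i
    induction i with
    | zero =>
      intro _
      obtain ⟨Y, hY⟩ := hspan 0 (Nat.zero_le k)
      suffices hYk : Y = kr 0 by rw [← hY, hYk]
      apply hcancel
      rw [hkr0]
      calc Ar * Y = Vᵀ * (((-s₀) • E + A) * (V * Y)) := by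
            rw [hAs, Matrix.mul_assoc, Matrix.mul_assoc]
        _ = -(Vᵀ * B) := by rw [hY, hk0, Matrix.mul_neg]
    | succ j IH =>
      intro hj
      obtain ⟨Y, hY⟩ := hspan (j + 1) hj
      suffices hYk : Y = kr (j + 1) by rw [← hY, hYk]
      apply hcancel
      rw [hkr j]
      calc Ar * Y = Vᵀ * (((-s₀) • E + A) * (V * Y)) := by
            rw [hAs, Matrix.mul_assoc, Matrix.mul_assoc]
        _ = Vᵀ * (E * kvec j) := by rw [hY, hk j]
        _ = Vᵀ * E * V * kr j := by
            rw [IH (Nat.le_of_succ_le hj), ← Matrix.mul_assoc, ← Matrix.mul_assoc]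
  refine ⟨?_, part2⟩
  intro i hi r c
  rw [moment_deriv E A B C s₀ hA kvec hk0 hk i r c,
    moment_deriv (Vᵀ * E * V) (Vᵀ * A * V) (Vᵀ * B) (C * V) s₀ hAr kr hkr0 hkr i r c,
    part2 i hi, ← Matrix.mul_assoc]
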